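/- Let E be a real Banach space, P a topological space, T ⊆ ℝ an interval, t0 ∈ T, x0 ∈ E, p0 ∈ P, and X : ℝ × E × P → E. Suppose there exist r > 0, α > 0, λ ∈ (0,1), an open neighbourhood O of p0, and integrable functions h, ℓ : ℝ → ℝ on I := T ∩ [t0 − α, t0 + α] such that, with B := closedBall x0 (2r): (i) for every x ∈ B and p ∈ O, s ↦ X(s, x, p) is measurable on I; (ii) for every s ∈ I and p ∈ O, y ↦ X(s, y, p) is continuous on B; (iii) ‖X(s, y, p)‖ ≤ h(s) for all s ∈ I, y ∈ B, p ∈ O, and ∫_I h(s) ds < r; (iv) ‖X(s, x1, p) − X(s, x2, p)‖ ≤ ℓ(s) ‖x1 − x2‖ for all s ∈ I, x1, x2 ∈ B, p ∈ O, and ∫_I ℓ(s) ds ≤ λ. For x ∈ closedBall x0 r and p ∈ O let Φ(·, x, p) : I → E denote the unique continuous curve with ‖Φ(t, x, p) − x‖ ≤ r for all t ∈ I and Φ(t, x, p) = x + ∫_{t0}^{t} X(s, Φ(s, x, p), p) ds. Then for every t ∈ I, every p ∈ O, and all x1, x2 ∈ closedBall x0 r: ‖Φ(t, x1, p) − Φ(t,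 x2, p)‖ ≤ (1 − λ)⁻¹ ‖x1 − x2‖. -/

import Mathlib

open Set MeasureTheory intervalIntegral

/-- Part (i) of the paper's Lemma 3.6 in the Banach-space local model: the fixed-time
local flow map `x ↦ Φ t x p` is Lipschitz with constant `(1 - λ)⁻¹`, uniformly in
`t ∈ I` and `p ∈ O`. -/
theorem local_flow_lipschitz_in_state
    {E P : Type*} [NormedAddCommGroup E] [NormedSpace ℝ E] [CompleteSpace E]
    [TopologicalSpace P]
    (T : Set ℝ) (hT : T.OrdConnected) (t0 : ℝ) (ht0 : t0 ∈ T)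
    (x0 : E) (p0 : P) (X : ℝ → E → P → E)
    (r α lam : ℝ) (hr : 0 < r) (hα : 0 < α) (hlam0 : 0 < lam) (hlam1 : lam < 1)
    (O : Set P) (hO : IsOpen O) (hp0 : p0 ∈ O)
    (I : Set ℝ) (B : Set E)
    (hI : I = T ∩ Icc (t0 - α) (t0 + α)) (hB : B = Metric.closedBall x0 (2 * r))
    (h ℓ : ℝ → ℝ) (hhint : IntegrableOn h I) (hℓint : IntegrableOn ℓ I)
    (hXmeas : ∀ x ∈ B, ∀ p ∈ O,
      AEStronglyMeasurable (fun s => X s x p) (volume.restrict I))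
    (hXcont : ∀ s ∈ I, ∀ p ∈ O, ContinuousOn (fun y => X s y p) B)
    (hXbd : ∀ s ∈ I, ∀ y ∈ B, ∀ p ∈ O, ‖X s y p‖ ≤ h s)
    (hhsmall : ∫ s in I, h s < r)
    (hXlip : ∀ s ∈ I, ∀ x1 ∈ B, ∀ x2 ∈ B, ∀ p ∈ O,
      ‖X s x1 p - X s x2 p‖ ≤ ℓ s * ‖x1 - x2‖)
    (hℓsmall : ∫ s in I, ℓ s ≤ lam)
    (Φ : ℝ → E → P → E)
    (hΦ : ∀ x ∈ Metric.closedBall x0 r, ∀ p ∈ O,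
      ContinuousOn (fun t => Φ t x p) I ∧ (∀ t ∈ I, ‖Φ t x p - x‖ ≤ r) ∧
      IntegrableOn (fun s => X s (Φ s x p) p) I ∧
      ∀ t ∈ I, Φ t x p = x + ∫ s in t0..t, X s (Φ s x p) p) :
    ∀ t ∈ I, ∀ p ∈ O, ∀ x1 ∈ Metric.closedBall x0 r, ∀ x2 ∈ Metric.closedBall x0 r,
      ‖Φ t x1 p - Φ t x2 p‖ ≤ (1 - lam)⁻¹ * ‖x1 - x2‖ := by
  -- setup
  rcases subsingleton_or_nontrivial E with hE | hE
  · intro t ht p hp x1 hx1 x2 hx2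
    have : Φ t x1 p = Φ t x2 p := Subsingleton.elim _ _
    rw [this, sub_self, norm_zero]
    exact mul_nonneg (inv_nonneg.2 (by linarith)) (norm_nonneg _)
  intro t ht p hp x1 hx1 x2 hx2
  have hImeas : MeasurableSet I := by
    rw [hI]; exact (hT.inter ordConnected_Icc).measurableSet
  have hIord : I.OrdConnected := by rw [hI]; exact hT.inter ordConnected_Icc
  have ht0I : t0 ∈ I := by
    rw [hI]; exact ⟨ht0, by constructor <;> linarith⟩
  -- ℓ is nonneg on I
  obtain ⟨z, hz⟩ := exists_ne (0 : E)
  have hzn : (0:ℝ) < ‖z‖ := norm_pos_iff.2 hz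
  have hℓnn : ∀ s ∈ I, 0 ≤ ℓ s := by
    intro s hs
    have hx0B : x0 ∈ B := by rw [hB]; simp [Metric.mem_closedBall]; linarith
    have hyB : x0 + (r / ‖z‖) • z ∈ B := by
      rw [hB, Metric.mem_closedBall, dist_eq_norm]
      have : x0 + (r / ‖z‖) • z - x0 = (r / ‖z‖) • z := by abel
      rw [this, norm_smul, Real.norm_eq_abs, abs_of_nonneg (by positivity)]
      rw [div_mul_cancel₀ _ (ne_of_gt hzn)]; linarith
    have := hXlip s hs x0 hx0B _ hyB p0 hp0
    have hnorm : ‖x0 - (x0 + (r / ‖z‖) • z)‖ = r := by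
      have : x0 - (x0 + (r / ‖z‖) • z) = -((r / ‖z‖) • z) := by abel
      rw [this, norm_neg, norm_smul, Real.norm_eq_abs, abs_of_nonneg (by positivity),
        div_mul_cancel₀ _ (ne_of_gt hzn)]
    rw [hnorm] at this
    nlinarith [norm_nonneg (X s x0 p0 - X s (x0 + (r / ‖z‖) • z) p0)]
  obtain ⟨hc1, hbd1, hint1, heq1⟩ := hΦ x1 hx1 p hp
  obtain ⟨hc2, hbd2, hint2, heq2⟩ := hΦ x2 hx2 p hp
  have hΦB : ∀ x ∈ Metric.closedBall x0 r, (∀ s ∈ I, ‖Φ s x p - x‖ ≤ r) →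
      ∀ s ∈ I, Φ s x p ∈ B := by
    intro x hx hbd s hs
    rw [hB, Metric.mem_closedBall, dist_eq_norm]
    calc ‖Φ s x p - x0‖ ≤ ‖Φ s x p - x‖ + ‖x - x0‖ := norm_sub_le_norm_sub_add_norm_sub _ _ _
    _ ≤ r + r := add_le_add (hbd s hs) (by rwa [← dist_eq_norm, ← Metric.mem_closedBall])
    _ = 2 * r := by ring
  set D : ℝ → ℝ := fun s => ‖Φ s x1 p - Φ s x2 p‖ with hD
  have hDbd : ∀ s ∈ I, D s ≤ 2 * r + ‖x1 - x2‖ := by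
    intro s hs
    calc D s ≤ ‖Φ s x1 p - x1‖ + ‖x1 - x2‖ + ‖x2 - Φ s x2 p‖ := by
          have : Φ s x1 p - Φ s x2 p = (Φ s x1 p - x1) + (x1 - x2) + (x2 - Φ s x2 p) := by abel
          show ‖Φ s x1 p - Φ s x2 p‖ ≤ _
          rw [this]
          exact (norm_add_le _ _).trans (add_le_add_left (norm_add_le _ _) _)
    _ ≤ r + ‖x1 - x2‖ + r := by
          have := hbd2 s hs
          rw [← norm_neg (x2 - Φ s x2 p)] at *
          simp only [neg_sub] at *
          exact add_le_add (add_le_add_left (hbd1 s hs) _) this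
    _ = 2 * r + ‖x1 - x2‖ := by ring
  have hne : (D '' I).Nonempty := ⟨D t0, t0, ht0I, rfl⟩
  have hbdd : BddAbove (D '' I) := by
    refine ⟨2 * r + ‖x1 - x2‖, ?_⟩
    rintro _ ⟨s, hs, rfl⟩; exact hDbd s hs
  set S := sSup (D '' I) with hS
  have hSle : ∀ s ∈ I, D s ≤ S := fun s hs => le_csSup hbdd ⟨s, hs, rfl⟩
  have hS0 : 0 ≤ S := le_trans (norm_nonneg _) (hSle t0 ht0I)
  -- key inequality
  have hkey : ∀ u ∈ I, D u ≤ ‖x1 - x2‖ + lam * S := by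
    intro u hu
    have hsub : Set.uIoc t0 u ⊆ I := Set.uIoc_subset_uIcc.trans (hIord.uIcc_subset ht0I hu)
    have hii1 : IntervalIntegrable (fun s => X s (Φ s x1 p) p) volume t0 u :=
      intervalIntegrable_iff.2 (hint1.mono_set hsub)
    have hii2 : IntervalIntegrable (fun s => X s (Φ s x2 p) p) volume t0 u :=
      intervalIntegrable_iff.2 (hint2.mono_set hsub)
    have heq : Φ u x1 p - Φ u x2 p = (x1 - x2) +
        ∫ s in t0..u, (X s (Φ s x1 p) p - X s (Φ s x2 p) p) := by
      rw [heq1 u hu, heq2 u hu, intervalIntegral.integral_sub hii1 hii2]; abel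
    have hnb : ‖∫ s in t0..u, (X s (Φ s x1 p) p - X s (Φ s x2 p) p)‖ ≤
        ∫ s in Set.uIoc t0 u, ‖X s (Φ s x1 p) p - X s (Φ s x2 p) p‖ :=
      intervalIntegral.norm_integral_le_integral_norm_uIoc
    have hmono : ∫ s in Set.uIoc t0 u, ‖X s (Φ s x1 p) p - X s (Φ s x2 p) p‖ ≤
        ∫ s in Set.uIoc t0 u, ℓ s * S := by
      apply setIntegral_mono_on
      · exact ((hint1.mono_set hsub).sub (hint2.mono_set hsub)).norm
      · exact (hℓint.mono_set hsub).mul_const S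
      · exact measurableSet_uIoc
      · intro s hs
        have hsI := hsub hs
        calc ‖X s (Φ s x1 p) p - X s (Φ s x2 p) p‖ ≤ ℓ s * D s :=
              hXlip s hsI _ (hΦB x1 hx1 hbd1 s hsI) _ (hΦB x2 hx2 hbd2 s hsI) p hp
        _ ≤ ℓ s * S := mul_le_mul_of_nonneg_left (hSle s hsI) (hℓnn s hsI)
    have hℓI : ∫ s in Set.uIoc t0 u, ℓ s ≤ ∫ s in I, ℓ s := by
      apply setIntegral_mono_set hℓint
      · exact (ae_restrict_iff' hImeas).2 (ae_of_all _ hℓnn)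
      · exact HasSubset.Subset.eventuallyLE hsub
    have hfin : ∫ s in Set.uIoc t0 u, ℓ s * S ≤ lam * S := by
      rw [MeasureTheory.integral_mul_const]
      calc (∫ s in Set.uIoc t0 u, ℓ s) * S ≤ (∫ s in I, ℓ s) * S :=
            mul_le_mul_of_nonneg_right hℓI hS0
      _ ≤ lam * S := mul_le_mul_of_nonneg_right hℓsmall hS0
    calc D u = ‖(x1 - x2) + ∫ s in t0..u, (X s (Φ s x1 p) p - X s (Φ s x2 p) p)‖ := by
          simp only [hD]; rw [heq]
    _ ≤ ‖x1 - x2‖ + ‖∫ s in t0..u, (X s (Φ s x1 p) p - X s (Φ s x2 p) p)‖ := norm_add_le _ _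
    _ ≤ ‖x1 - x2‖ + lam * S := add_le_add_right (hnb.trans (hmono.trans hfin)) _
  have hSkey : S ≤ ‖x1 - x2‖ + lam * S := by
    apply csSup_le hne
    rintro _ ⟨s, hs, rfl⟩; exact hkey s hs
  have hSfin : S ≤ (1 - lam)⁻¹ * ‖x1 - x2‖ := by
    have h1 : (0:ℝ) < 1 - lam := by linarith
    rw [inv_mul_eq_div, le_div_iff₀ h1]
    nlinarith
  exact le_trans (hSle t ht) hSfin
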